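/- For every p ∈ Δ and every label j with p_j > 0, the JS loss converges to the cross-entropy loss as π1 → 0 from the right: lim_{π1 → 0^+} L_JS(p, e_j; π1) = −log p_j. -/

import Mathlib

/-- Discrete Kullback–Leibler divergence `D(a ‖ b) = Σ_k a_k·log(a_k/b_k)`
(with the convention `0·log 0 = 0`, automatic since multiplication by `0`). -/
noncomputable def klDiv {c : ℕ} (a b : Fin c → ℝ) : ℝ :=
  ∑ k, a k * Real.log (a k / b k)

/-- The `j`-th standard one-hot vector `e_j`. -/
def oneHot {c : ℕ} (j : Fin c) : Fin c → ℝ :=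
  fun k => if k = j then 1 else 0

/-- The JS loss of a prediction `p` in the simplex against the one-hot label `e_j`,
with hyperparameters `π1 ∈ (0,1)` and `π2 = 1 − π1`:
`L_JS(p, e_j; π1) = (π1·D(e_j ‖ m) + π2·D(p ‖ m))/Z` where `m = π1·e_j + π2·p` and
`Z = −(1 − π1)·log(1 − π1)`. -/
noncomputable def jsLoss {c : ℕ} (p : Fin c → ℝ) (j : Fin c) (π1 : ℝ) : ℝ :=
  (π1 * klDiv (oneHot j) (fun k => π1 * oneHot j k + (1 - π1) * p k)
      + (1 - π1) * klDiv p (fun k => π1 * oneHot j k + (1 - π1) * p k))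
    / (-(1 - π1) * Real.log (1 - π1))

/-- For every `p` in the probability simplex and every label `j` with
`p_j > 0`, the JS loss converges to the cross-entropy loss as `π1 → 0` from the right:
`lim_{π1 → 0^+} L_JS(p, e_j; π1) = −log p_j`. -/
lemma klA {c : ℕ} (p : Fin c → ℝ) (j : Fin c) (t : ℝ) :
    klDiv (oneHot j) (fun k => t * oneHot j k + (1 - t) * p k)
      = -Real.log (t + (1 - t) * p j) := by
  unfold klDiv
  rw [Finset.sum_eq_single j]
  · simp [oneHot, one_div, Real.log_inv]
  · intro k _ hk; simp [oneHot, hk]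
  · simp

lemma klB {c : ℕ} (p : Fin c → ℝ) (j : Fin c) (hp0 : ∀ i, 0 ≤ p i)
    (hp1 : ∑ i, p i = 1) (hpj : 0 < p j) (t : ℝ) (ht : t ∈ Set.Ioo (0:ℝ) 1) :
    klDiv p (fun k => t * oneHot j k + (1 - t) * p k)
      = -Real.log (1 - t) + p j * (Real.log (p j) - Real.log (t + (1 - t) * p j)
          + Real.log (1 - t)) := by
  obtain ⟨ht0, ht1⟩ := ht
  have h1t : (0:ℝ) < 1 - t := by linarith
  have hm : 0 < t + (1 - t) * p j := by positivity
  unfold klDiv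
  have key : ∀ k ∈ Finset.univ, p k * Real.log (p k / (t * oneHot j k + (1 - t) * p k))
      = p k * (-Real.log (1 - t))
        + (if k = j then p j * (Real.log (p j) - Real.log (t + (1 - t) * p j)
              + Real.log (1 - t)) else 0) := by
    intro k _
    by_cases hk : k = j
    · rw [hk]
      have h1 : oneHot j j = (1:ℝ) := by simp [oneHot]
      rw [h1, if_pos rfl, mul_one, Real.log_div hpj.ne' hm.ne']
      ring
    · have h0 : oneHot j k = (0:ℝ) := by simp [oneHot, hk]
      rw [h0, if_neg hk, mul_zero, zero_add, add_zero]
      by_cases hk0 : p k = 0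
      · simp [hk0]
      · have : p k / ((1 - t) * p k) = (1 - t)⁻¹ := by
          field_simp
        rw [this, Real.log_inv]
  rw [Finset.sum_congr rfl key, Finset.sum_add_distrib, ← Finset.sum_mul, hp1,
    Finset.sum_ite_eq' Finset.univ j]
  simp

lemma algId (t L m lq q : ℝ) (ht : t ≠ 0) (hL : L ≠ 0) (h1t : 1 - t ≠ 0) :
    (t * -m + (1 - t) * (-L + q * (lq - m + L))) / (-(1 - t) * L)
      = t / -L * (-m / (1 - t)) + (1 - q) + q * ((lq - m) / t) * (t / -L) := by
  rw [neg_mul, div_neg]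
  simp only [div_neg]
  field_simp
  ring

theorem jsLoss_tendsto_crossEntropy (c : ℕ) (hc : 2 ≤ c)
    (p : Fin c → ℝ) (hp0 : ∀ i, 0 ≤ p i) (hp1 : ∑ i, p i = 1)
    (j : Fin c) (hpj : 0 < p j) :
    Filter.Tendsto (fun π1 : ℝ => jsLoss p j π1) (nhdsWithin 0 (Set.Ioi 0))
      (nhds (-Real.log (p j))) := by
  set q := p j with hq
  set g : ℝ → ℝ := fun t =>
    (t / (-Real.log (1 - t))) * (-Real.log (t + (1 - t) * q) / (1 - t))
      + (1 - q)
      + q * ((Real.log q - Real.log (t + (1 - t) * q)) / t) * (t / (-Real.log (1 - t)))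
    with hg
  -- limit 1: t / (-log(1-t)) → 1
  have h1 : Filter.Tendsto (fun t : ℝ => t / (-Real.log (1 - t)))
      (nhdsWithin 0 (Set.Ioi 0)) (nhds 1) := by
    have hd : HasDerivAt (fun t : ℝ => -Real.log (1 - t)) 1 0 := by
      have hinner : HasDerivAt (fun t : ℝ => 1 - t) (-1) 0 := by
        simpa using (hasDerivAt_id (0:ℝ)).const_sub 1
      have h2 := ((Real.hasDerivAt_log (by norm_num : (1:ℝ) - 0 ≠ 0)).comp (0:ℝ) hinner).neg
      exact h2.congr_deriv (by norm_num)
    have hs := hasDerivAt_iff_tendsto_slope.mp hd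
    have hs' : Filter.Tendsto (fun t : ℝ => -Real.log (1 - t) / t)
        (nhdsWithin 0 (Set.Ioi 0)) (nhds 1) := by
      have := hs.mono_left (nhdsWithin_mono 0 (by
        intro x hx
        exact Set.mem_compl_singleton_iff.mpr (ne_of_gt hx)))
      refine this.congr' ?_
      filter_upwards [self_mem_nhdsWithin] with x hx
      simp [slope_def_field]
    have := hs'.inv₀ one_ne_zero
    simp only [inv_one] at this
    exact this.congr fun x => by rw [inv_div]
  -- limit 2: -log(t + (1-t)q)/(1-t) → -log q
  have h2 : Filter.Tendsto (fun t : ℝ => -Real.log (t + (1 - t) * q) / (1 - t))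
      (nhdsWithin 0 (Set.Ioi 0)) (nhds (-Real.log q)) := by
    have hcont : ContinuousAt (fun t : ℝ => -Real.log (t + (1 - t) * q) / (1 - t)) 0 := by
      apply ContinuousAt.div
      · exact ((Real.continuousAt_log (by simpa using hpj.ne')).comp (by fun_prop)).neg
      · fun_prop
      · norm_num
    have := hcont.tendsto.mono_left (nhdsWithin_le_nhds (s := Set.Ioi (0:ℝ)))
    simpa using this
  -- limit 3: (log q - log(t+(1-t)q))/t → -((1-q)/q)
  have h3 : Filter.Tendsto (fun t : ℝ => (Real.log q - Real.log (t + (1 - t) * q)) / t)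
      (nhdsWithin 0 (Set.Ioi 0)) (nhds (-((1 - q) / q))) := by
    have hinner : HasDerivAt (fun t : ℝ => t + (1 - t) * q) (1 - q) 0 := by
      have := (hasDerivAt_id (0:ℝ)).add (((hasDerivAt_id (0:ℝ)).const_sub 1).mul_const q)
      exact this.congr_deriv (by ring)
    have hlog : HasDerivAt (fun t : ℝ => Real.log (t + (1 - t) * q)) (q⁻¹ * (1 - q)) 0 := by
      have h := (Real.hasDerivAt_log (x := (0:ℝ) + (1 - 0) * q)
        (by simpa using hpj.ne')).comp (0:ℝ) hinner
      simp [Function.comp] at h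
      exact h
    have hd : HasDerivAt (fun t : ℝ => Real.log q - Real.log (t + (1 - t) * q))
        (-((1 - q) / q)) 0 := by
      have := hlog.const_sub (Real.log q)
      exact this.congr_deriv (by ring)
    have hs := hasDerivAt_iff_tendsto_slope.mp hd
    have := hs.mono_left (nhdsWithin_mono 0 (by
      intro x hx
      exact Set.mem_compl_singleton_iff.mpr (ne_of_gt hx)))
    refine this.congr' ?_
    filter_upwards [self_mem_nhdsWithin] with x hx
    simp [slope_def_field]
  -- combined limit of g
  have hgl : Filter.Tendsto g (nhdsWithin 0 (Set.Ioi 0)) (nhds (-Real.log q)) := by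
    have hc := ((h1.mul h2).add (tendsto_const_nhds (x := 1 - q))).add
      (((tendsto_const_nhds (x := q)).mul h3).mul h1)
    have heq : 1 * (-Real.log q) + (1 - q) + q * (-((1 - q) / q)) * 1 = -Real.log q := by
      field_simp
      ring
    rw [← heq]
    exact hc
  -- eventual equality
  have hev : ∀ᶠ t in nhdsWithin (0:ℝ) (Set.Ioi 0), g t = jsLoss p j t := by
    filter_upwards [Ioo_mem_nhdsGT_of_mem (Set.mem_Ico.mpr ⟨le_refl (0:ℝ), one_pos⟩)] with t ht
    obtain ⟨ht0, ht1⟩ := ht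
    have h1t : (0:ℝ) < 1 - t := by linarith
    have hL : Real.log (1 - t) < 0 := Real.log_neg h1t (by linarith)
    have hLne : Real.log (1 - t) ≠ 0 := ne_of_lt hL
    have hD : -(1 - t) * Real.log (1 - t) ≠ 0 := by
      apply mul_ne_zero _ hLne
      intro h; rw [neg_eq_zero] at h; linarith
    rw [jsLoss, klA, klB p j hp0 hp1 hpj t ⟨ht0, ht1⟩, hg]
    exact (algId t (Real.log (1 - t)) (Real.log (t + (1 - t) * q)) (Real.log q) q
      ht0.ne' hLne (by linarith)).symm
  exact hgl.congr' hev
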